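/- Let F be a nonempty finite set (the feasible allocation set) contained in a set A, let Ĵ₋ᵢ : F → ℝ, let cᵢ : A → ℝ be agent i's true cost and ĉᵢ : A → ℝ its estimate learned from truthful feedback. Define the VCG payment p(a) := (min over a'' ∈ F of Ĵ₋ᵢ(a'')) − Ĵ₋ᵢ(a) and utility u(a) := p(a) − cᵢ(a). Suppose: (i) â minimizes a ↦ Ĵ₋ᵢ(a) + ĉᵢ(a) over F; (ii) min_{a∈F} (Ĵ₋ᵢ(a) + ĉᵢ(a)) ≤ min_{a∈F} Ĵ₋ᵢ(a); (iii) there exists a⁰ ∈ A with cᵢ(a⁰) = 0 and ĉᵢ(a⁰) = 0; and (iv) |(cᵢ(a) − cᵢ(a')) − (ĉᵢ(a) − ĉᵢ(a'))| ≤ ε for all a, a' ∈ A. Then u(â) ≥ −ε. -/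
import Mathlib

/-- One-shot VCG with learned costs: approximate individual rationality (deterministic core).
`F` is the (nonempty finite) feasible set inside the allocation space `A`;
`a0` is a zero-cost allocation; `ε` bounds the learning error of cost differences. -/
theorem stmt1 {A : Type*} (F : Finset A) (hF : F.Nonempty)
    (Jmi : A → ℝ) (ci chat : A → ℝ) (ε : ℝ)
    (p u : A → ℝ)
    (hp : ∀ a, p a = F.inf' hF Jmi - Jmi a)
    (hu : ∀ a, u a = p a - ci a)
    (ahat : A) (hmem : ahat ∈ F)
    (hmin : ∀ a ∈ F, Jmi ahat + chat ahat ≤ Jmi a + chat a)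
    (hii : F.inf' hF (fun a => Jmi a + chat a) ≤ F.inf' hF Jmi)
    (hzero : ∃ a0 : A, ci a0 = 0 ∧ chat a0 = 0)
    (herr : ∀ a a' : A, |(ci a - ci a') - (chat a - chat a')| ≤ ε) :
    u ahat ≥ -ε := by
  obtain ⟨a0, hc0, hch0⟩ := hzero
  have h1 : Jmi ahat + chat ahat ≤ F.inf' hF Jmi := by
    refine le_trans ?_ hii
    exact Finset.le_inf' hF _ (fun b hb => hmin b hb)
  have h2 : |ci ahat - chat ahat| ≤ ε := by
    have := herr ahat a0
    simpa [hc0, hch0] using this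
  have h3 : ci ahat - chat ahat ≤ ε := (abs_le.mp h2).2
  rw [hu, hp]
  linarith
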